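/- arXiv:0910.2293 — 4 statements merged into one kernel-verified Lean document; each statement's English description precedes it below -/
import Mathlib

section
/- Suppose a graded diagram D is built only from the following indecomposable pieces: (1) one even row of length 4p+1 (p ≥ 0); (2) one odd row of length 4p−1 (p ≥ 1); (3) two even rows of length 4p−1 (p ≥ 1); (4) two odd rows of length 4p+1 (p ≥ 0); (5) one even and one odd row of common length 2p (p ≥ 1). Then in the associated partition d₀ every even part occurs with even multiplicity, and in d₁ every odd part occurs with even multiplicity. -/
def rowLabel (b : Bool) (i : ℕ) : Bool := xor b (decide (i % 2 = 1))

def onesCount (l : ℕ) (b : Bool) : ℕ :=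
  ((Finset.range l).filter fun i => rowLabel b i = true).card

def zerosCount (l : ℕ) (b : Bool) : ℕ :=
  ((Finset.range l).filter fun i => rowLabel b i = false).card

/-- The five Kraft–Procesi indecomposable graded diagrams (a row is a pair
`(length, starting label)`, `false` = even row, `true` = odd row). -/
def Indec (M : Multiset (ℕ × Bool)) : Prop :=
  (∃ p : ℕ, M = {(4 * p + 1, false)}) ∨
  (∃ p : ℕ, 1 ≤ p ∧ M = {(4 * p - 1, true)}) ∨
  (∃ p : ℕ, 1 ≤ p ∧ M = {(4 * p - 1, false), (4 * p - 1, false)}) ∨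
  (∃ p : ℕ, M = {(4 * p + 1, true), (4 * p + 1, true)}) ∨
  (∃ p : ℕ, 1 ≤ p ∧ M = {(2 * p, false), (2 * p, true)})

lemma onesCount_val : ∀ l, onesCount l false = l / 2 ∧ onesCount l true = (l + 1) / 2 := by
  intro l
  induction l with
  | zero => simp [onesCount]
  | succ n ih =>
    have h : ∀ b, onesCount (n+1) b = onesCount n b + (if rowLabel b n then 1 else 0) := by
      intro b
      simp only [onesCount, Finset.range_add_one, Finset.filter_insert]
      split <;> simp_all [Finset.card_insert_of_notMem]
    obtain ⟨ih1, ih2⟩ := ih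
    have hf := h false
    have ht := h true
    simp only [rowLabel] at hf ht
    rcases Nat.even_or_odd n with ⟨k,hk⟩ | ⟨k,hk⟩ <;>
      [ (have hm : n % 2 = 0 := by omega);
        (have hm : n % 2 = 1 := by omega) ] <;>
      simp [hm] at hf ht <;> omega

lemma zeros_add_ones (l : ℕ) (b : Bool) : zerosCount l b + onesCount l b = l := by
  unfold zerosCount onesCount
  have := Finset.card_filter_add_card_filter_not (s := Finset.range l)
    (p := fun i => rowLabel b i = false)
  simpa [Bool.not_eq_false] using this

lemma zerosCount_val : ∀ l, zerosCount l false = (l + 1) / 2 ∧ zerosCount l true = l / 2 := by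
  intro l
  have h1 := onesCount_val l
  have h2 := zeros_add_ones l false
  have h3 := zeros_add_ones l true
  omega

lemma even_count_pair (a c : ℕ) : Even (Multiset.count a ({c, c} : Multiset ℕ)) := by
  by_cases h : a = c <;>
    simp [h, Multiset.insert_eq_cons, Multiset.count_cons, Multiset.count_singleton]

lemma count_single_ne (a c : ℕ) (h : a ≠ c) :
    Multiset.count a ({c} : Multiset ℕ) = 0 := by
  simp [Multiset.count_singleton, h]

lemma even_count_map_sum (pieces : Multiset (Multiset (ℕ × Bool)))
    (f : ℕ × Bool → ℕ) (a : ℕ)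
    (h : ∀ M ∈ pieces, Even (Multiset.count a (M.map f))) :
    Even (Multiset.count a (pieces.sum.map f)) := by
  induction pieces using Multiset.induction with
  | empty => simp
  | cons M s ih =>
    rw [Multiset.sum_cons, Multiset.map_add, Multiset.count_add]
    exact (h M (Multiset.mem_cons_self M s)).add
      (ih (fun N hN => h N (Multiset.mem_cons_of_mem hN)))


/-- if a graded diagram `D` is a union of Kraft–Procesi indecomposable
pieces, then every even part of `d₀` occurs with even multiplicity and every odd part
of `d₁` occurs with even multiplicity. -/
theorem stmt8 (pieces : Multiset (Multiset (ℕ × Bool)))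
    (hind : ∀ M ∈ pieces, Indec M)
    (D : Multiset (ℕ × Bool)) (hD : D = pieces.sum) :
    (∀ a : ℕ, 0 < a → a % 2 = 0 →
      Even (Multiset.count a (D.map fun r => zerosCount r.1 r.2))) ∧
    (∀ a : ℕ, a % 2 = 1 →
      Even (Multiset.count a (D.map fun r => onesCount r.1 r.2))) := by
  subst hD
  have key := even_count_map_sum pieces
  constructor
  · intro a ha0 ha2
    apply key
    intro M hM
    rcases hind M hM with ⟨p, hp⟩ | ⟨p, hp1, hp⟩ | ⟨p, hp1, hp⟩ | ⟨p, hp⟩ | ⟨p, hp1, hp⟩ <;>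
      subst hp <;> simp only [Multiset.map_singleton, Multiset.insert_eq_cons,
        Multiset.map_cons, Multiset.map_singleton]
    · have hz := (zerosCount_val (4 * p + 1)).1
      rw [count_single_ne a _ (by omega)]
      exact Even.zero
    · have hz := (zerosCount_val (4 * p - 1)).2
      rw [count_single_ne a _ (by omega)]
      exact Even.zero
    · exact even_count_pair a _
    · exact even_count_pair a _
    · have h1 := (zerosCount_val (2 * p)).1
      have h2 := (zerosCount_val (2 * p)).2
      have : zerosCount (2 * p) false = zerosCount (2 * p) true := by omega
      rw [this]
      exact even_count_pair a _
  · intro a ha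
    apply key
    intro M hM
    rcases hind M hM with ⟨p, hp⟩ | ⟨p, hp1, hp⟩ | ⟨p, hp1, hp⟩ | ⟨p, hp⟩ | ⟨p, hp1, hp⟩ <;>
      subst hp <;> simp only [Multiset.map_singleton, Multiset.insert_eq_cons,
        Multiset.map_cons, Multiset.map_singleton]
    · have hz := (onesCount_val (4 * p + 1)).1
      rw [count_single_ne a _ (by omega)]
      exact Even.zero
    · have hz := (onesCount_val (4 * p - 1)).2
      rw [count_single_ne a _ (by omega)]
      exact Even.zero
    · exact even_count_pair a _
    · exact even_count_pair a _
    · have h1 := (onesCount_val (2 * p)).1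
      have h2 := (onesCount_val (2 * p)).2
      have : onesCount (2 * p) false = onesCount (2 * p) true := by omega
      rw [this]
      exact even_count_pair a _
end

section
/- Let D, D' be graded diagrams with n₀(D) = n₀(D') and n₁(D) = n₁(D'). If D ≤ D' in the column-deletion order (for all k ≥ 1, n₀(D^(k)) ≤ n₀(D'^(k)) and n₁(D^(k)) ≤ n₁(D'^(k))), then the underlying partition of D is dominated by the underlying partition of D' in the dominance order on partitions. -/
def nZeros (D : Multiset (ℕ × Bool)) : ℕ := (D.map fun r => zerosCount r.1 r.2).sum

def nOnes (D : Multiset (ℕ × Bool)) : ℕ := (D.map fun r => onesCount r.1 r.2).sum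

def deleteCols (k : ℕ) (D : Multiset (ℕ × Bool)) : Multiset (ℕ × Bool) :=
  (D.filter fun r => k < r.1).map fun r => (r.1 - k, xor r.2 (decide (k % 2 = 1)))

def diagLE (D D' : Multiset (ℕ × Bool)) : Prop :=
  ∀ k : ℕ, 1 ≤ k →
    nZeros (deleteCols k D) ≤ nZeros (deleteCols k D') ∧
    nOnes (deleteCols k D) ≤ nOnes (deleteCols k D')

/-- The shape of a graded diagram: its row lengths sorted in decreasing order. -/
def shape (D : Multiset (ℕ × Bool)) : List ℕ := (D.map fun r => r.1).sort (· ≥ ·)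

lemma ones_add_zeros (l : ℕ) (b : Bool) : onesCount l b + zerosCount l b = l := by
  have h := Finset.card_filter_add_card_filter_not
    (s := Finset.range l) (p := fun i => rowLabel b i = true)
  simpa [onesCount, zerosCount, Bool.not_eq_true] using h

def fsum (D : Multiset (ℕ × Bool)) (k : ℕ) : ℕ := (D.map fun r => r.1 - k).sum

lemma total_deleteCols (k : ℕ) (D : Multiset (ℕ × Bool)) :
    nZeros (deleteCols k D) + nOnes (deleteCols k D) = fsum D k := by
  unfold nZeros nOnes deleteCols fsum
  rw [Multiset.map_map, Multiset.map_map, ← Multiset.sum_map_add]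
  have h1 : (fun i : ℕ × Bool =>
      ((fun r : ℕ × Bool => zerosCount r.1 r.2) ∘ fun r : ℕ × Bool => (r.1 - k, xor r.2 (decide (k % 2 = 1)))) i +
      ((fun r : ℕ × Bool => onesCount r.1 r.2) ∘ fun r : ℕ × Bool => (r.1 - k, xor r.2 (decide (k % 2 = 1)))) i)
      = fun i : ℕ × Bool => i.1 - k := by
    funext i
    simp only [Function.comp_apply]
    rw [add_comm]
    exact ones_add_zeros _ _
  rw [h1]
  conv_rhs => rw [← Multiset.filter_add_not (fun r : ℕ × Bool => k < r.1) D]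
  rw [Multiset.map_add, Multiset.sum_add]
  have h2 : ((D.filter (fun r : ℕ × Bool => ¬ k < r.1)).map fun r => r.1 - k).sum = 0 := by
    apply Multiset.sum_eq_zero
    intro x hx
    obtain ⟨r, hr, rfl⟩ := Multiset.mem_map.mp hx
    have := (Multiset.mem_filter.mp hr).2
    omega
  omega

lemma total_zero (D : Multiset (ℕ × Bool)) :
    nZeros D + nOnes D = fsum D 0 := by
  unfold nZeros nOnes fsum
  rw [← Multiset.sum_map_add]
  apply congrArg
  apply Multiset.map_congr rfl
  intro r _
  rw [Nat.sub_zero, add_comm]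
  exact ones_add_zeros _ _

lemma sum_eq_len_mul_add (k : ℕ) : ∀ (l : List ℕ), (∀ x ∈ l, k ≤ x) →
    l.sum = l.length * k + (l.map (· - k)).sum := by
  intro l
  induction l with
  | nil => simp
  | cons a l ih =>
    intro h
    have ha := h a (List.mem_cons_self (a := a) (l := l))
    have hl := ih (fun x hx => h x (List.mem_cons_of_mem _ hx))
    simp only [List.map_cons, List.sum_cons, List.length_cons, Nat.succ_mul, hl]
    omega

lemma sum_le_len_mul_add (k : ℕ) : ∀ (l : List ℕ),
    l.sum ≤ l.length * k + (l.map (· - k)).sum := by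
  intro l
  induction l with
  | nil => simp
  | cons a l ih =>
    simp only [List.map_cons, List.sum_cons, List.length_cons, Nat.succ_mul]
    omega

lemma sum_map_zero (k : ℕ) (l : List ℕ) (h : ∀ x ∈ l, x ≤ k) :
    (l.map (· - k)).sum = 0 := by
  apply List.sum_eq_zero
  intro x hx
  obtain ⟨a, ha, rfl⟩ := List.mem_map.mp hx
  have := h a ha
  omega

lemma list_dom (s t : List ℕ) (ht : t.Pairwise (· ≥ ·))
    (hf : ∀ k, (s.map (· - k)).sum ≤ (t.map (· - k)).sum) (j : ℕ) :
    (s.take j).sum ≤ (t.take j).sum := by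
  have hstake : (s.take j).sum ≤ s.sum := by
    have := List.sum_take_add_sum_drop s j; omega
  by_cases hj : t.length ≤ j
  · rw [List.take_of_length_le hj]
    have h0 := hf 0
    simp only [Nat.sub_zero, List.map_id'] at h0
    omega
  · push_neg at hj
    set k := t[j] with hk
    have hpw := List.pairwise_iff_getElem.mp ht
    have htake : ∀ x ∈ t.take j, k ≤ x := by
      intro x hx
      obtain ⟨i, hi, rfl⟩ := List.mem_iff_getElem.mp hx
      have hij : i < j := lt_of_lt_of_le hi (by simp [List.length_take])
      rw [List.getElem_take]
      exact hpw i j (by omega) hj hij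
    have hdrop : ∀ x ∈ t.drop j, x ≤ k := by
      intro x hx
      obtain ⟨i, hi, rfl⟩ := List.mem_iff_getElem.mp hx
      have hi' : j + i < t.length := by
        have := List.length_drop (i := j) (l := t)
        omega
      rw [List.getElem_drop]
      rcases Nat.eq_zero_or_pos i with h0 | h0
      · subst h0; simp [hk]
      · exact hpw j (j + i) (by omega) hi' (by omega)
    have e1 : (t.take j).sum = j * k + ((t.take j).map (· - k)).sum := by
      rw [sum_eq_len_mul_add k _ htake, List.length_take, Nat.min_eq_left hj.le]
    have e2 : ((t.drop j).map (· - k)).sum = 0 := sum_map_zero k _ hdrop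
    have e3 : (t.map (· - k)).sum = ((t.take j).map (· - k)).sum := by
      conv_lhs => rw [← List.take_append_drop j t]
      rw [List.map_append, List.sum_append, e2, add_zero]
    have h1 : (s.take j).sum ≤ j * k + ((s.take j).map (· - k)).sum := by
      have := sum_le_len_mul_add k (s.take j)
      have hlen : (s.take j).length ≤ j := by simp [List.length_take]
      calc (s.take j).sum ≤ (s.take j).length * k + ((s.take j).map (· - k)).sum := this
        _ ≤ j * k + ((s.take j).map (· - k)).sum := by
            exact Nat.add_le_add_right (Nat.mul_le_mul_right k hlen) _
    have h2 : ((s.take j).map (· - k)).sum ≤ (s.map (· - k)).sum := by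
      rw [List.map_take]
      have := List.sum_take_add_sum_drop (s.map (· - k)) j
      omega
    have := hf k
    omega

lemma shape_map_sum (D : Multiset (ℕ × Bool)) (k : ℕ) :
    ((shape D).map (· - k)).sum = fsum D k := by
  unfold shape fsum
  rw [← Multiset.sum_coe, ← Multiset.map_coe, Multiset.sort_eq, Multiset.map_map]
  rfl

/-- if `D ≤ D'` in the column-deletion order and `D`, `D'` have the
same numbers of 0-boxes and 1-boxes, then the shape of `D` is dominated by the
shape of `D'` (all partial sums of the decreasingly sorted row lengths compare). -/
theorem stmt13 (D D' : Multiset (ℕ × Bool))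
    (hpos : ∀ r ∈ D, 0 < r.1) (hpos' : ∀ r ∈ D', 0 < r.1)
    (hn0 : nZeros D = nZeros D') (hn1 : nOnes D = nOnes D')
    (hle : diagLE D D') :
    ∀ j : ℕ, ((shape D).take j).sum ≤ ((shape D').take j).sum := by
  intro j
  apply list_dom
  · exact Multiset.pairwise_sort _ _
  · intro k
    rw [shape_map_sum, shape_map_sum]
    rcases Nat.eq_zero_or_pos k with rfl | hk
    · rw [← total_zero, ← total_zero]; omega
    · have h := hle k hk
      have h1 := total_deleteCols k D
      have h2 := total_deleteCols k D'
      omega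
end

section
/- Consider the two graded diagrams D₁ with rows (of lengths) (2k, 2k, 2k−2, 2k−2) where the rows of length 2k are one even and one odd and likewise for length 2k−2, and D₂ with four rows of length 2k−1, two even and two odd appropriately (two odd rows of length 2k−1 if 2k−1 ≡ 3 mod 4, matching the indecomposable types). Then D₁ and D₂ have the same associated pair (d₀, d₁), and D₁ and D₂ are comparable in the column-deletion order, with D₂ ≤ D₁. -/
def dZero (D : Multiset (ℕ × Bool)) : Multiset ℕ :=
  (D.map fun r => zerosCount r.1 r.2).filter fun a => 0 < a

def dOne (D : Multiset (ℕ × Bool)) : Multiset ℕ :=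
  (D.map fun r => onesCount r.1 r.2).filter fun a => 0 < a

lemma counts (l : ℕ) : onesCount l false = l / 2 ∧ onesCount l true = (l+1)/2 ∧
    zerosCount l false = (l+1)/2 ∧ zerosCount l true = l/2 := by
  induction l with
  | zero => simp [onesCount, zerosCount]
  | succ n ih =>
    obtain ⟨h1, h2, h3, h4⟩ := ih
    have e : ∀ b : Bool, (Finset.range (n+1)).filter (fun i => rowLabel b i = true)
        = if rowLabel b n then insert n ((Finset.range n).filter (fun i => rowLabel b i = true))
          else (Finset.range n).filter (fun i => rowLabel b i = true) := by
      intro b; rw [Finset.range_add_one, Finset.filter_insert]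
    have e0 : ∀ b : Bool, (Finset.range (n+1)).filter (fun i => rowLabel b i = false)
        = if rowLabel b n then (Finset.range n).filter (fun i => rowLabel b i = false)
          else insert n ((Finset.range n).filter (fun i => rowLabel b i = false)) := by
      intro b; rw [Finset.range_add_one, Finset.filter_insert]
      cases hb : rowLabel b n <;> simp [hb]
    have hni : ∀ (p : ℕ → Prop) [DecidablePred p], n ∉ (Finset.range n).filter p := by
      intro p _ h
      simp at h
    rcases Nat.even_or_odd n with he | ho
    · have hmod : n % 2 = 0 := Nat.even_iff.mp he
      have rf : rowLabel false n = false := by simp [rowLabel, hmod]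
      have rt : rowLabel true n = true := by simp [rowLabel, hmod]
      constructor
      · unfold onesCount; rw [e false, rf]; rw [if_neg (by simp)]
        unfold onesCount at h1; rw [h1]; omega
      refine ⟨?_, ?_, ?_⟩
      · unfold onesCount; rw [e true, rt]; rw [if_pos rfl]
        rw [Finset.card_insert_of_notMem (hni _)]
        unfold onesCount at h2; rw [h2]; omega
      · unfold zerosCount; rw [e0 false, rf]; rw [if_neg (by simp)]
        rw [Finset.card_insert_of_notMem (hni _)]
        unfold zerosCount at h3; rw [h3]; omega
      · unfold zerosCount; rw [e0 true, rt]; rw [if_pos rfl]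
        unfold zerosCount at h4; rw [h4]; omega
    · have hmod : n % 2 = 1 := Nat.odd_iff.mp ho
      have rf : rowLabel false n = true := by simp [rowLabel, hmod]
      have rt : rowLabel true n = false := by simp [rowLabel, hmod]
      constructor
      · unfold onesCount; rw [e false, rf]; rw [if_pos rfl]
        rw [Finset.card_insert_of_notMem (hni _)]
        unfold onesCount at h1; rw [h1]; omega
      refine ⟨?_, ?_, ?_⟩
      · unfold onesCount; rw [e true, rt]; rw [if_neg (by simp)]
        unfold onesCount at h2; rw [h2]; omega
      · unfold zerosCount; rw [e0 false, rf]; rw [if_pos rfl]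
        unfold zerosCount at h3; rw [h3]; omega
      · unfold zerosCount; rw [e0 true, rt]; rw [if_neg (by simp)]
        rw [Finset.card_insert_of_notMem (hni _)]
        unfold zerosCount at h4; rw [h4]; omega

lemma deleteCols_add (j : ℕ) (s t : Multiset (ℕ × Bool)) :
    deleteCols j (s + t) = deleteCols j s + deleteCols j t := by
  simp [deleteCols, Multiset.filter_add, Multiset.map_add]

lemma nZeros_add (s t : Multiset (ℕ × Bool)) : nZeros (s + t) = nZeros s + nZeros t := by
  simp [nZeros, Multiset.map_add, Multiset.sum_add]

lemma nOnes_add (s t : Multiset (ℕ × Bool)) : nOnes (s + t) = nOnes s + nOnes t := by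
  simp [nOnes, Multiset.map_add, Multiset.sum_add]

lemma pair_zeros (j l : ℕ) : nZeros (deleteCols j {(l, false), (l, true)}) = l - j := by
  obtain ⟨_, _, z1, z2⟩ := counts (l - j)
  by_cases h : j < l
  · simp [deleteCols, nZeros, Multiset.filter_singleton, h]
    cases hb : decide (j % 2 = 1) <;> simp [hb, z1, z2] <;> omega
  · simp [deleteCols, nZeros, Multiset.filter_singleton, h]
    omega

lemma pair_ones (j l : ℕ) : nOnes (deleteCols j {(l, false), (l, true)}) = l - j := by
  obtain ⟨o1, o2, _, _⟩ := counts (l - j)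
  by_cases h : j < l
  · simp [deleteCols, nOnes, Multiset.filter_singleton, h]
    cases hb : decide (j % 2 = 1) <;> simp [hb, o1, o2] <;> omega
  · simp [deleteCols, nOnes, Multiset.filter_singleton, h]
    omega

lemma quad_split {α : Type*} (a b : α) : ({a, a, b, b} : Multiset α) = {a, b} + {a, b} := by
  simp only [Multiset.insert_eq_cons, Multiset.singleton_add, Multiset.cons_add, zero_add]
  rw [Multiset.cons_swap b a]

lemma quad_swap (a b : ℕ) : ({a, a, b, b} : Multiset ℕ) = {b, b, a, a} := by
  ext x
  by_cases h1 : x = a <;> by_cases h2 : x = b <;>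
    simp [Multiset.count_cons, Multiset.count_singleton, h1, h2] <;> split_ifs <;> omega

/-- for `k ≥ 1`, the graded diagram `D₁` with an even and an odd row of
length `2k` plus an even and an odd row of length `2k-2`, and the graded diagram `D₂`
with two even and two odd rows of length `2k-1`, have the same associated pair
`(d₀, d₁)`, and they are comparable in the column-deletion order with `D₂ ≤ D₁`. -/
theorem stmt15 (k : ℕ) (hk : 1 ≤ k)
    (D₁ D₂ : Multiset (ℕ × Bool))
    (hD₁ : D₁ = {(2 * k, false), (2 * k, true), (2 * k - 2, false), (2 * k - 2, true)})
    (hD₂ : D₂ = {(2 * k - 1, false), (2 * k - 1, false), (2 * k - 1, true), (2 * k - 1, true)}) :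
    dZero D₁ = dZero D₂ ∧ dOne D₁ = dOne D₂ ∧ diagLE D₂ D₁ := by
  subst hD₁ hD₂
  obtain ⟨a1, a2, a3, a4⟩ := counts (2 * k)
  obtain ⟨b1, b2, b3, b4⟩ := counts (2 * k - 2)
  obtain ⟨c1, c2, c3, c4⟩ := counts (2 * k - 1)
  have h1 : (2 * k + 1) / 2 = k := by omega
  have h2 : 2 * k / 2 = k := by omega
  have h3 : (2 * k - 2 + 1) / 2 = k - 1 := by omega
  have h4 : (2 * k - 2) / 2 = k - 1 := by omega
  have h5 : (2 * k - 1 + 1) / 2 = k := by omega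
  have h6 : (2 * k - 1) / 2 = k - 1 := by omega
  have hsplit₁ : ({(2 * k, false), (2 * k, true), (2 * k - 2, false), (2 * k - 2, true)} :
      Multiset (ℕ × Bool)) = {(2 * k, false), (2 * k, true)} + {(2 * k - 2, false), (2 * k - 2, true)} := rfl
  have hsplit₂ : ({(2 * k - 1, false), (2 * k - 1, false), (2 * k - 1, true), (2 * k - 1, true)} :
      Multiset (ℕ × Bool)) = {(2 * k - 1, false), (2 * k - 1, true)} + {(2 * k - 1, false), (2 * k - 1, true)} :=
    quad_split _ _
  refine ⟨?_, ?_, ?_⟩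
  · unfold dZero
    congr 1
    simp only [Multiset.insert_eq_cons, Multiset.map_cons, Multiset.map_singleton]
    rw [a3, a4, b3, b4, c3, c4, h1, h2, h3, h4, h5, h6]
  · unfold dOne
    congr 1
    simp only [Multiset.insert_eq_cons, Multiset.map_cons, Multiset.map_singleton]
    rw [a1, a2, b1, b2, c1, c2, h1, h2, h3, h4, h5, h6]
    have := quad_swap k (k - 1)
    simpa using this
  · intro j hj
    rw [hsplit₁, hsplit₂, deleteCols_add, deleteCols_add, nZeros_add, nZeros_add,
      nOnes_add, nOnes_add, pair_zeros, pair_zeros, pair_zeros, pair_ones, pair_ones, pair_ones]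
    omega
end

section
/- For k > l ≥ 1, consider graded diagrams containing the sub-diagram configurations D₂ with rows of lengths (2k, 2k, 2k−2, 2k−2, 2l−1, 2l−1, 2l−1, 2l−1) and D₃ with rows of lengths (2k−1, 2k−1, 2k−1, 2k−1, 2l, 2l, 2l−2, 2l−2) (parities as in the Kraft–Procesi indecomposables so that both have d₀ = d₁ = (k,k,k−1,k−1,l,l,l−1,l−1)). Then D₂ and D₃ are incomparable in the column-deletion order. -/
lemma card_mod (L r : ℕ) (hr : r ≤ 1) : ((Finset.range L).filter (fun i => i % 2 = r)).card
    = (L + 1 - r) / 2 := by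
  induction L with
  | zero => simp; omega
  | succ n ih =>
    rw [Finset.range_add_one, Finset.filter_insert]
    split_ifs with h
    · rw [Finset.card_insert_of_notMem (by simp), ih]; omega
    · rw [ih]; omega

lemma zc (L : ℕ) (b : Bool) : zerosCount L b = if b then L / 2 else (L + 1) / 2 := by
  cases b <;> simp [zerosCount, rowLabel] <;> rw [card_mod _ _ (by omega)] <;> omega

lemma nZeros_cons (c : ℕ) (r : ℕ × Bool) (D : Multiset (ℕ × Bool)) :
    nZeros (deleteCols c (r ::ₘ D)) =
      (if c < r.1 then zerosCount (r.1 - c) (xor r.2 (decide (c % 2 = 1))) else 0)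
        + nZeros (deleteCols c D) := by
  simp only [deleteCols, nZeros, Multiset.filter_cons]
  split_ifs <;> simp

lemma nZeros_singleton (c : ℕ) (r : ℕ × Bool) :
    nZeros (deleteCols c {r}) =
      (if c < r.1 then zerosCount (r.1 - c) (xor r.2 (decide (c % 2 = 1))) else 0) := by
  rw [← Multiset.cons_zero, nZeros_cons]
  simp [nZeros, deleteCols]

lemma nZeros_zero (c : ℕ) : nZeros (deleteCols c 0) = 0 := by
  simp [nZeros, deleteCols]

/-- for `k > l ≥ 1`, the graded diagram `D₂` with rows of lengths
`(2k, 2k, 2k-2, 2k-2, 2l-1, 2l-1, 2l-1, 2l-1)` and the graded diagram `D₃` with rows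
of lengths `(2k-1, 2k-1, 2k-1, 2k-1, 2l, 2l, 2l-2, 2l-2)` (parities as in the
Kraft–Procesi indecomposables, so that both have
`d₀ = d₁ = (k,k,k-1,k-1,l,l,l-1,l-1)`) are incomparable in the column-deletion order. -/
theorem stmt16 (k l : ℕ) (hl : 1 ≤ l) (hkl : l < k)
    (D₂ D₃ : Multiset (ℕ × Bool))
    (hD₂ : D₂ = {(2 * k, false), (2 * k, true), (2 * k - 2, false), (2 * k - 2, true),
      (2 * l - 1, false), (2 * l - 1, false), (2 * l - 1, true), (2 * l - 1, true)})
    (hD₃ : D₃ = {(2 * k - 1, false), (2 * k - 1, false), (2 * k - 1, true), (2 * k - 1, true),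
      (2 * l, false), (2 * l, true), (2 * l - 2, false), (2 * l - 2, true)}) :
    ¬ diagLE D₂ D₃ ∧ ¬ diagLE D₃ D₂ := by
  subst hD₂ hD₃
  constructor
  · intro h
    obtain ⟨hz, -⟩ := h (2 * k - 1) (by omega)
    have hm : (2 * k - 1) % 2 = 1 := by omega
    simp only [Multiset.insert_eq_cons, nZeros_cons, nZeros_singleton, zc, hm,
      decide_eq_true_eq, Bool.xor_false, Bool.xor_true] at hz
    norm_num at hz
    split_ifs at hz <;> omega
  · intro h
    obtain ⟨hz, -⟩ := h (2 * l - 1) (by omega)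
    have hm : (2 * l - 1) % 2 = 1 := by omega
    simp only [Multiset.insert_eq_cons, nZeros_cons, nZeros_singleton, zc, hm,
      decide_eq_true_eq, Bool.xor_false, Bool.xor_true] at hz
    norm_num at hz
    split_ifs at hz <;> omega
end
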